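/- Let P be a simple convex polytope of dimension n that is flag and has exactly 2n facets. Then P is combinatorially equivalent to the n-cube. Equivalently (dually): a flag simplicial (n−1)-sphere with exactly 2n vertices is isomorphic to the boundary complex of the n-dimensional crosspolytope (the n-fold join of S^0). -/
import Mathlib


/-- An abstract simplicial complex on the vertex set `V` (with every point of `V`
a vertex), given by its set of faces. -/
structure SimplicialCx (V : Type*) where
  faces : Set (Finset V)
  downward : ∀ s ∈ faces, ∀ t : Finset V, t ⊆ s → t ∈ faces
  vertex : ∀ v : V, ({v} : Finset V) ∈ faces

/-- A simplicial complex is flag if every set of vertices which are pairwise joined by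
edges spans a face. -/
def SimplicialCx.Flag {V : Type*} [DecidableEq V] (K : SimplicialCx V) : Prop :=
  ∀ s : Finset V, (∀ u ∈ s, ∀ v ∈ s, u ≠ v → ({u, v} : Finset V) ∈ K.faces) → s ∈ K.faces

/-- `K` is a closed pseudomanifold of dimension `n - 1` (so facets have `n` vertices):
it is pure of dimension `n - 1`, every ridge lies in exactly two facets, and it is
strongly connected. -/
def SimplicialCx.Pseudomanifold {V : Type*} [DecidableEq V] (K : SimplicialCx V) (n : ℕ) : Prop :=
  (∀ s ∈ K.faces, s.card ≤ n) ∧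
  (∀ s ∈ K.faces, ∃ t ∈ K.faces, s ⊆ t ∧ t.card = n) ∧
  (∀ s ∈ K.faces, s.card = n - 1 →
    {t | t ∈ K.faces ∧ t.card = n ∧ s ⊆ t}.ncard = 2) ∧
  (∀ t₁ ∈ K.faces, ∀ t₂ ∈ K.faces, t₁.card = n → t₂.card = n →
    Relation.ReflTransGen
      (fun a b : Finset V => a ∈ K.faces ∧ b ∈ K.faces ∧ a.card = n ∧ b.card = n ∧
        (a ∩ b).card = n - 1) t₁ t₂)

namespace CrossAux

open Finset

variable {V : Type*} [DecidableEq V]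

/-- Pseudomanifold minus strong connectivity. -/
def Cond (K : SimplicialCx V) (n : ℕ) : Prop :=
  (∀ s ∈ K.faces, s.card ≤ n) ∧
  (∀ s ∈ K.faces, ∃ t ∈ K.faces, s ⊆ t ∧ t.card = n) ∧
  (∀ s ∈ K.faces, s.card = n - 1 →
    {t | t ∈ K.faces ∧ t.card = n ∧ s ⊆ t}.ncard = 2)

lemma pair_mem (K : SimplicialCx V) {s : Finset V} (hs : s ∈ K.faces) {u w : V}
    (hu : u ∈ s) (hw : w ∈ s) : ({u, w} : Finset V) ∈ K.faces :=
  K.downward s hs _ (insert_subset hu (Finset.singleton_subset_iff.2 hw))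

/-- Every vertex has a non-neighbour. -/
lemma exists_nonnbr (K : SimplicialCx V) (n : ℕ) (hn : 1 ≤ n) (hflag : K.Flag)
    (hc : Cond K n) (v : V) : ∃ w, w ≠ v ∧ ({v, w} : Finset V) ∉ K.faces := by
  by_contra h
  push_neg at h
  -- every facet contains v
  have hall : ∀ t ∈ K.faces, t.card = n → v ∈ t := by
    intro t ht htc
    by_contra hv
    have hface : insert v t ∈ K.faces := by
      apply hflag
      intro u1 hu1 u2 hu2 hne
      rcases Finset.mem_insert.1 hu1 with rfl | hu1
      · exact h u2 (Ne.symm hne)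
      · rcases Finset.mem_insert.1 hu2 with rfl | hu2
        · rw [Finset.pair_comm]; exact h u1 hne
        · exact pair_mem K ht hu1 hu2
    have := hc.1 _ hface
    rw [Finset.card_insert_of_notMem hv, htc] at this
    omega
  obtain ⟨t, ht, hsub, htc⟩ := hc.2.1 {v} (K.vertex v)
  have hvt : v ∈ t := hsub (Finset.mem_singleton_self v)
  have hr : t.erase v ∈ K.faces := K.downward _ ht _ (Finset.erase_subset _ _)
  have hrc : (t.erase v).card = n - 1 := by rw [Finset.card_erase_of_mem hvt, htc]
  have h2 := hc.2.2 _ hr hrc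
  obtain ⟨a, b, hab, hSab⟩ := Set.ncard_eq_two.1 h2
  have hat : a ∈ K.faces ∧ a.card = n ∧ t.erase v ⊆ a := by
    have : a ∈ ({a, b} : Set (Finset V)) := by simp
    rw [← hSab] at this; exact this
  have hbt : b ∈ K.faces ∧ b.card = n ∧ t.erase v ⊆ b := by
    have : b ∈ ({a, b} : Set (Finset V)) := by simp
    rw [← hSab] at this; exact this
  have hkey : ∀ c : Finset V, c ∈ K.faces → c.card = n → t.erase v ⊆ c → c = t := by
    intro c hcf hcc hsubc
    have hvc : v ∈ c := hall c hcf hcc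
    have : t ⊆ c := by
      intro x hx
      by_cases hxv : x = v
      · subst hxv; exact hvc
      · exact hsubc (Finset.mem_erase.2 ⟨hxv, hx⟩)
    exact (Finset.eq_of_subset_of_card_le this (by omega)).symm
  exact hab ((hkey a hat.1 hat.2.1 hat.2.2).trans (hkey b hbt.1 hbt.2.1 hbt.2.2).symm)

/-- `u` is a neighbour of `v`. -/
def nbr (K : SimplicialCx V) (v u : V) : Prop := u ≠ v ∧ ({u, v} : Finset V) ∈ K.faces

noncomputable def linkEmb (K : SimplicialCx V) (v : V) : {u // nbr K v u} ↪ V :=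
  Function.Embedding.subtype _

@[simp] lemma linkEmb_apply (K : SimplicialCx V) (v : V) (u : {u // nbr K v u}) :
    linkEmb K v u = (u : V) := rfl

lemma v_notMem_map (K : SimplicialCx V) (v : V) (s : Finset {u // nbr K v u}) :
    v ∉ s.map (linkEmb K v) := by
  intro h
  obtain ⟨u, _, hu⟩ := Finset.mem_map.1 h
  exact u.2.1 hu

lemma card_insert_map (K : SimplicialCx V) (v : V) (s : Finset {u // nbr K v u}) :
    (insert v (s.map (linkEmb K v))).card = s.card + 1 := by
  rw [Finset.card_insert_of_notMem (v_notMem_map K v s), Finset.card_map]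

/-- The link of a vertex. -/
noncomputable def link (K : SimplicialCx V) (v : V) : SimplicialCx {u // nbr K v u} where
  faces := {s | insert v (s.map (linkEmb K v)) ∈ K.faces}
  downward s hs t hts :=
    K.downward _ hs _ (Finset.insert_subset_insert _ (Finset.map_subset_map.2 hts))
  vertex u := by
    show insert v _ ∈ K.faces
    rw [Finset.map_singleton, linkEmb_apply]
    rw [show (insert v {(u : V)} : Finset V) = {(u : V), v} from Finset.pair_comm v _]
    exact u.2.2

lemma mem_link_faces (K : SimplicialCx V) (v : V) (s : Finset {u // nbr K v u}) :
    s ∈ (link K v).faces ↔ insert v (s.map (linkEmb K v)) ∈ K.faces := Iff.rfl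

lemma link_flag (K : SimplicialCx V) (v : V) (hflag : K.Flag) : (link K v).Flag := by
  intro s hs
  rw [mem_link_faces]
  apply hflag
  intro u1 hu1 u2 hu2 hne
  rcases Finset.mem_insert.1 hu1 with rfl | hu1
  · rcases Finset.mem_insert.1 hu2 with rfl | hu2
    · exact absurd rfl hne
    · obtain ⟨w, _, rfl⟩ := Finset.mem_map.1 hu2
      rw [Finset.pair_comm]; exact w.2.2
  · obtain ⟨w1, hw1, rfl⟩ := Finset.mem_map.1 hu1
    rcases Finset.mem_insert.1 hu2 with rfl | hu2
    · exact w1.2.2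
    · obtain ⟨w2, hw2, rfl⟩ := Finset.mem_map.1 hu2
      have hne' : w1 ≠ w2 := fun h => hne (by rw [h])
      have hface := hs w1 hw1 w2 hw2 hne'
      rw [mem_link_faces] at hface
      refine K.downward _ hface _ ?_
      intro x hx
      rcases Finset.mem_insert.1 hx with rfl | hx
      · exact Finset.mem_insert_of_mem (Finset.mem_map_of_mem _ (Finset.mem_insert_self _ _))
      · rw [Finset.mem_singleton] at hx; subst hx
        exact Finset.mem_insert_of_mem
          (Finset.mem_map_of_mem _ (Finset.mem_insert_of_mem (Finset.mem_singleton_self _)))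

lemma nbr_of_mem_facet (K : SimplicialCx V) (v : V) {t : Finset V} (ht : t ∈ K.faces)
    (hvt : v ∈ t) {u : V} (hu : u ∈ t) (hne : u ≠ v) : nbr K v u :=
  ⟨hne, pair_mem K ht hu hvt⟩

open Classical in
lemma facet_subtype_map (K : SimplicialCx V) (v : V) {t : Finset V} (ht : t ∈ K.faces)
    (hvt : v ∈ t) :
    ((t.erase v).subtype (nbr K v)).map (linkEmb K v) = t.erase v := by
  rw [linkEmb, Finset.subtype_map, Finset.filter_true_of_mem]
  intro u hu
  exact nbr_of_mem_facet K v ht hvt (Finset.mem_of_mem_erase hu) (Finset.ne_of_mem_erase hu)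

open Classical in
lemma link_cond (K : SimplicialCx V) (v : V) {n : ℕ} (hc : Cond K n) (hn : 2 ≤ n) :
    Cond (link K v) (n - 1) := by
  refine ⟨?_, ?_, ?_⟩
  · intro s hs
    rw [mem_link_faces] at hs
    have := hc.1 _ hs
    rw [card_insert_map] at this
    omega
  · intro s hs
    rw [mem_link_faces] at hs
    obtain ⟨t, ht, hsub, htc⟩ := hc.2.1 _ hs
    have hvt : v ∈ t := hsub (Finset.mem_insert_self _ _)
    refine ⟨(t.erase v).subtype (nbr K v), ?_, ?_, ?_⟩
    · rw [mem_link_faces, facet_subtype_map K v ht hvt, Finset.insert_erase hvt]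
      exact ht
    · intro u hu
      rw [Finset.mem_subtype]
      refine Finset.mem_erase.2 ⟨u.2.1, ?_⟩
      exact hsub (Finset.mem_insert_of_mem (Finset.mem_map_of_mem _ hu))
    · have := congrArg Finset.card (facet_subtype_map K v ht hvt)
      rw [Finset.card_map] at this
      rw [this, Finset.card_erase_of_mem hvt, htc]
  · intro s hs hsc
    rw [mem_link_faces] at hs
    have hcard : (insert v (s.map (linkEmb K v))).card = n - 1 := by
      rw [card_insert_map]; omega
    have h2 := hc.2.2 _ hs hcard
    set F : Finset {u // nbr K v u} → Finset V := fun t' => insert v (t'.map (linkEmb K v))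
      with hF
    have hFinj : Function.Injective F := by
      intro a b hab
      have h1 : (a.map (linkEmb K v)) = (b.map (linkEmb K v)) := by
        have ha := v_notMem_map K v a
        have hb := v_notMem_map K v b
        rw [← Finset.erase_insert ha, ← Finset.erase_insert hb]
        show (F a).erase v = (F b).erase v
        rw [hab]
      exact Finset.map_injective _ h1
    have himg : F '' {t' | t' ∈ (link K v).faces ∧ t'.card = n - 1 ∧ s ⊆ t'} =
        {t | t ∈ K.faces ∧ t.card = n ∧ insert v (s.map (linkEmb K v)) ⊆ t} := by
      ext t; constructor
      · rintro ⟨t', ⟨htf, htc, hst⟩, rfl⟩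
        rw [mem_link_faces] at htf
        refine ⟨htf, ?_, ?_⟩
        · show (insert v (t'.map (linkEmb K v))).card = n
          rw [card_insert_map]; omega
        · exact Finset.insert_subset_insert _ (Finset.map_subset_map.2 hst)
      · rintro ⟨htf, htc, hst⟩
        have hvt : v ∈ t := hst (Finset.mem_insert_self _ _)
        refine ⟨(t.erase v).subtype (nbr K v), ⟨?_, ?_, ?_⟩, ?_⟩
        · rw [mem_link_faces, facet_subtype_map K v htf hvt, Finset.insert_erase hvt]
          exact htf
        · have := congrArg Finset.card (facet_subtype_map K v htf hvt)
          rw [Finset.card_map] at this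
          rw [this, Finset.card_erase_of_mem hvt, htc]
        · intro u hu
          rw [Finset.mem_subtype]
          refine Finset.mem_erase.2 ⟨u.2.1, ?_⟩
          exact hst (Finset.mem_insert_of_mem (Finset.mem_map_of_mem _ hu))
        · show insert v (((t.erase v).subtype (nbr K v)).map (linkEmb K v)) = t
          rw [facet_subtype_map K v htf hvt, Finset.insert_erase hvt]
    calc {t' | t' ∈ (link K v).faces ∧ t'.card = n - 1 ∧ s ⊆ t'}.ncard
        = (F '' {t' | t' ∈ (link K v).faces ∧ t'.card = n - 1 ∧ s ⊆ t'}).ncard :=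
          (Set.ncard_image_of_injective _ hFinj).symm
      _ = 2 := by rw [himg]; exact h2

lemma link_nonempty (K : SimplicialCx V) {n : ℕ} (hc : Cond K n) (hn : 2 ≤ n) (v : V) :
    Nonempty {u // nbr K v u} := by
  obtain ⟨t, ht, hsub, htc⟩ := hc.2.1 {v} (K.vertex v)
  have hvt : v ∈ t := hsub (Finset.mem_singleton_self v)
  have hne : (t.erase v).Nonempty := by
    rw [← Finset.card_pos, Finset.card_erase_of_mem hvt, htc]; omega
  obtain ⟨u, hu⟩ := hne
  exact ⟨⟨u, nbr_of_mem_facet K v ht hvt (Finset.mem_of_mem_erase hu)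
    (Finset.ne_of_mem_erase hu)⟩⟩

universe u

/-- Lower bound: a flag complex satisfying the pseudomanifold conditions (minus
connectivity) in dimension `n - 1` has at least `2n` vertices. -/
lemma lb : ∀ (n : ℕ) (V : Type u) [DecidableEq V] [Fintype V] (K : SimplicialCx V),
    K.Flag → Cond K n → Nonempty V → 2 * n ≤ Fintype.card V := by
  intro n
  induction n with
  | zero => intro V _ _ K _ _ _; simp
  | succ m ih =>
    intro V _ _ K hflag hc hne
    classical
    obtain ⟨v⟩ := hne
    obtain ⟨w, hwv, hw⟩ := exists_nonnbr K (m + 1) (by omega) hflag hc v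
    have h1 : 2 * m ≤ (Finset.univ.filter (nbr K v)).card := by
      rcases Nat.eq_zero_or_pos m with rfl | hm
      · simp
      · have hlc : Cond (link K v) m := by
          have := link_cond K v hc (by omega)
          simpa using this
        have := ih _ (link K v) (link_flag K v hflag) hlc
          (link_nonempty K hc (by omega) v)
        rwa [Fintype.card_subtype] at this
    have hvN : v ∉ Finset.univ.filter (nbr K v) := by
      simp [nbr]
    have hwN : w ∉ Finset.univ.filter (nbr K v) := by
      simp only [Finset.mem_filter, Finset.mem_univ, true_and, nbr, not_and]
      intro _
      rw [Finset.pair_comm]; exact hw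
    have hfin : (insert v (insert w (Finset.univ.filter (nbr K v)))).card ≤ Fintype.card V := by
      rw [← Finset.card_univ]
      exact Finset.card_le_card (Finset.subset_univ _)
    rw [Finset.card_insert_of_notMem (by
        simp only [Finset.mem_insert, not_or]
        exact ⟨Ne.symm hwv, hvN⟩),
      Finset.card_insert_of_notMem hwN] at hfin
    omega

end CrossAux

open CrossAux Finset in
/-- A flag simplicial complex which is a closed pseudomanifold of dimension `n - 1` and
has exactly `2n` vertices is isomorphic to the boundary complex of the `n`-dimensional
crosspolytope: there is a bijection of the vertices with `Fin n × Bool` under which the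
faces are exactly the vertex sets containing no antipodal pair.  Dually: a flag simple
convex `n`-polytope with exactly `2n` facets is combinatorially equivalent to the
`n`-cube. -/
theorem flag_pseudomanifold_card_eq_is_crosspolytope (V : Type*) [DecidableEq V]
    [Fintype V] (n : ℕ) (hn : 1 ≤ n) (K : SimplicialCx V)
    (hflag : K.Flag) (hpm : K.Pseudomanifold n) (hcard : Fintype.card V = 2 * n) :
    ∃ e : V ≃ Fin n × Bool, ∀ s : Finset V,
      s ∈ K.faces ↔ ∀ i : Fin n, ¬(e.symm (i, true) ∈ s ∧ e.symm (i, false) ∈ s) := by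
  classical
  have hC : Cond K n := ⟨hpm.1, hpm.2.1, hpm.2.2.1⟩
  have hV : Nonempty V := by
    rw [← Fintype.card_pos_iff]; omega
  -- each vertex has a unique non-neighbour
  have huniq : ∀ v : V, ∃! w, w ≠ v ∧ ({v, w} : Finset V) ∉ K.faces := by
    intro v
    obtain ⟨w, hw⟩ := exists_nonnbr K n hn hflag hC v
    refine ⟨w, hw, ?_⟩
    intro w' hw'
    by_contra hne
    have hNv : 2 * (n - 1) ≤ (Finset.univ.filter (nbr K v)).card := by
      rcases eq_or_lt_of_le hn with h1 | h2
      · simp [← h1]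
      · have hlc : Cond (link K v) (n - 1) := link_cond K v hC (by omega)
        have := lb (n - 1) _ (link K v) (link_flag K v hflag) hlc
          (link_nonempty K hC (by omega) v)
        rwa [Fintype.card_subtype] at this
    set N := Finset.univ.filter (nbr K v) with hN
    have hnotmem : ∀ x : V, x ≠ v → ({v, x} : Finset V) ∉ K.faces → x ∉ N := by
      intro x hx1 hx2
      simp only [hN, Finset.mem_filter, Finset.mem_univ, true_and, nbr, not_and]
      intro _
      rw [Finset.pair_comm]; exact hx2
    have hvN : v ∉ N := by simp [hN, nbr]
    have hwN : w ∉ N := hnotmem w hw.1 hw.2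
    have hw'N : w' ∉ N := hnotmem w' hw'.1 hw'.2
    have hfin : (insert v (insert w (insert w' N))).card ≤ Fintype.card V := by
      rw [← Finset.card_univ]
      exact Finset.card_le_card (Finset.subset_univ _)
    rw [Finset.card_insert_of_notMem (by
        simp only [Finset.mem_insert, not_or]
        exact ⟨Ne.symm hw.1, Ne.symm hw'.1, hvN⟩),
      Finset.card_insert_of_notMem (by
        simp only [Finset.mem_insert, not_or]
        exact ⟨fun h => hne h.symm, hwN⟩),
      Finset.card_insert_of_notMem hw'N] at hfin
    omega
  -- the antipode map
  set a : V → V := fun v => (huniq v).choose with ha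
  have ha1 : ∀ v, a v ≠ v := fun v => (huniq v).choose_spec.1.1
  have ha2 : ∀ v, ({v, a v} : Finset V) ∉ K.faces := fun v => (huniq v).choose_spec.1.2
  have ha3 : ∀ v w, w ≠ v → ({v, w} : Finset V) ∉ K.faces → w = a v :=
    fun v w h1 h2 => (huniq v).choose_spec.2 w ⟨h1, h2⟩
  have hinv : ∀ v, a (a v) = v :=
    fun v => (ha3 (a v) v (Ne.symm (ha1 v)) (by rw [Finset.pair_comm]; exact ha2 v)).symm
  have hedge : ∀ u w : V, w ≠ u → w ≠ a u → ({u, w} : Finset V) ∈ K.faces := by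
    intro u w h1 h2
    by_contra h
    exact h2 (ha3 u w h1 h)
  -- a fixed facet
  have hempty : (∅ : Finset V) ∈ K.faces :=
    K.downward {hV.some} (K.vertex hV.some) ∅ (Finset.empty_subset _)
  obtain ⟨t, ht, -, htc⟩ := hC.2.1 ∅ hempty
  have hnotboth : ∀ u : V, ¬(u ∈ t ∧ a u ∈ t) := by
    rintro u ⟨h1, h2⟩
    exact ha2 u (pair_mem K ht h1 h2)
  have hone : ∀ u : V, u ∉ t → a u ∈ t := by
    intro u hu
    by_contra hau
    have hface : insert u t ∈ K.faces := by
      apply hflag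
      intro x hx y hy hxy
      rcases Finset.mem_insert.1 hx with hx | hx
      · rcases Finset.mem_insert.1 hy with hy | hy
        · exact absurd (hx.trans hy.symm) hxy
        · rw [hx]
          exact hedge u y (fun h => hu (h ▸ hy)) (fun h => hau (h ▸ hy))
      · rcases Finset.mem_insert.1 hy with hy | hy
        · rw [hy, Finset.pair_comm]
          exact hedge u x (fun h => hu (h ▸ hx)) (fun h => hau (h ▸ hx))
        · exact pair_mem K ht hx hy
    have := hC.1 _ hface
    rw [Finset.card_insert_of_notMem hu, htc] at this
    omega
  have f : {x // x ∈ t} ≃ Fin n :=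
    Fintype.equivFinOfCardEq (by rw [Fintype.card_coe]; exact htc)
  refine ⟨{
    toFun := fun u => if hu : u ∈ t then (f ⟨u, hu⟩, true) else (f ⟨a u, hone u hu⟩, false)
    invFun := fun p => if p.2 then ((f.symm p.1 : {x // x ∈ t}) : V)
      else a ((f.symm p.1 : {x // x ∈ t}) : V)
    left_inv := ?_
    right_inv := ?_ }, ?_⟩
  · intro u
    by_cases hu : u ∈ t
    · simp [hu]
    · simp [hu, hinv]
  · rintro ⟨i, b⟩
    cases b
    · have hx : ((f.symm i : {x // x ∈ t}) : V) ∈ t := (f.symm i).2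
      have hax : a ((f.symm i : {x // x ∈ t}) : V) ∉ t := fun h =>
        hnotboth _ ⟨hx, h⟩
      simp only [if_neg Bool.false_ne_true]
      rw [dif_neg hax]
      have : (⟨a (a ((f.symm i : {x // x ∈ t}) : V)), hone _ hax⟩ : {x // x ∈ t})
          = f.symm i := by
        apply Subtype.ext
        simp [hinv]
      rw [this]
      simp
    · simp only [if_pos]
      rw [dif_pos (f.symm i).2]
      have : (⟨((f.symm i : {x // x ∈ t}) : V), (f.symm i).2⟩ : {x // x ∈ t}) = f.symm i :=
        Subtype.ext rfl
      rw [this]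
      simp
  · intro s
    constructor
    · intro hs i hi
      simp only [Equiv.coe_fn_symm_mk, if_pos, if_neg Bool.false_ne_true] at hi
      exact ha2 _ (pair_mem K hs hi.1 hi.2)
    · intro h
      apply hflag
      intro u hu w hw hne
      by_contra hnf
      have hwa : w = a u := ha3 u w (Ne.symm hne) hnf
      subst hwa
      by_cases hu' : u ∈ t
      · have := h (f ⟨u, hu'⟩)
        apply this
        constructor <;>
          · simp only [Equiv.coe_fn_symm_mk, if_pos, if_neg Bool.false_ne_true,
              Equiv.symm_apply_apply]
            assumption
      · have hau : a u ∈ t := hone u hu'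
        have := h (f ⟨a u, hau⟩)
        apply this
        constructor
        · simp only [Equiv.coe_fn_symm_mk, if_pos, Equiv.symm_apply_apply]
          exact hw
        · simp only [Equiv.coe_fn_symm_mk, if_neg Bool.false_ne_true,
            Equiv.symm_apply_apply, hinv]
          exact hu
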